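/- For binary classification with classifiers h₁, h₂ ∈ H, the error probabilities under the true mixture p and the estimated mixture q satisfy |P_p[error of h] − P_q[error of h]| ≤ (1/2)·d_B(p̃, q̃) whenever the error event {h(z) ≠ y} can be expressed via the disagreement set of two classifiers in H; in particular, if H contains the Bayes-optimal labeling function, then P_p[error of h] ≤ P_q[error of h] + (1/2)·d_B(p, q) + λ, where λ is the sum of the errors of the best joint classifier under p and q. -/

import Mathlib

open MeasureTheory

/-- The B-distance induced by a family `H` of binary classifiers. -/
noncomputable def dB {Z : Type*} [MeasurableSpace Z] (H : Set (Z → Bool))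
    (p q : Measure Z) : ℝ :=
  2 * ⨆ h₁ : H, ⨆ h₂ : H,
    |(p {z | h₁.1 z ≠ h₂.1 z}).toReal - (q {z | h₁.1 z ≠ h₂.1 z}).toReal|

/-- Triangle inequality for disagreement sets. -/
lemma tri_aux {Z : Type*} [MeasurableSpace Z] (μ : MeasureTheory.Measure Z)
    [IsProbabilityMeasure μ] (a b c : Z → Bool) :
    (μ {z | a z ≠ c z}).toReal ≤
      (μ {z | a z ≠ b z}).toReal + (μ {z | b z ≠ c z}).toReal := by
  have hsub : {z | a z ≠ c z} ⊆ {z | a z ≠ b z} ∪ {z | b z ≠ c z} := by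
    intro z hz
    by_contra hcon
    simp only [Set.mem_union, Set.mem_setOf_eq, not_or, not_not] at hcon hz
    exact hz (hcon.1.trans hcon.2)
  have h1 : μ {z | a z ≠ c z} ≤ μ {z | a z ≠ b z} + μ {z | b z ≠ c z} :=
    le_trans (measure_mono hsub) (measure_union_le _ _)
  have h2 := ENNReal.toReal_mono (by finiteness) h1
  rwa [ENNReal.toReal_add (measure_ne_top _ _) (measure_ne_top _ _)] at h2

/-- Domain-adaptation bound for binary classification: if `H` contains the
(Bayes-optimal) labeling functions `f_p` and `f_q`, then for every `h ∈ H` the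
error under `p` is bounded by the error under `q`, plus half the B-distance,
plus the error `λ` of the best joint classifier under `p` and `q`. -/
theorem stmt7 {Z : Type*} [MeasurableSpace Z] (H : Set (Z → Bool))
    (p q : Measure Z) [IsProbabilityMeasure p] [IsProbabilityMeasure q]
    (fp fq : Z → Bool) (hfp : fp ∈ H) (hfq : fq ∈ H)
    (h : Z → Bool) (hh : h ∈ H) :
    (p {z | h z ≠ fp z}).toReal
      ≤ (q {z | h z ≠ fq z}).toReal + (1 / 2) * dB H p q +
        ⨅ h' : H, ((p {z | h'.1 z ≠ fp z}).toReal + (q {z | h'.1 z ≠ fq z}).toReal) := by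
  have hHne : Nonempty H := ⟨⟨fp, hfp⟩⟩
  set f : H → H → ℝ := fun h₁ h₂ =>
    |(p {z | h₁.1 z ≠ h₂.1 z}).toReal - (q {z | h₁.1 z ≠ h₂.1 z}).toReal| with hf
  have hbd : ∀ h₁ h₂ : H, f h₁ h₂ ≤ 1 := by
    intro h₁ h₂
    have hp1 : (p {z | h₁.1 z ≠ h₂.1 z}).toReal ≤ 1 := by
      have := ENNReal.toReal_mono (by simp) (prob_le_one (μ := p)
        (s := {z | h₁.1 z ≠ h₂.1 z}))
      simpa using this
    have hq1 : (q {z | h₁.1 z ≠ h₂.1 z}).toReal ≤ 1 := by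
      have := ENNReal.toReal_mono (by simp) (prob_le_one (μ := q)
        (s := {z | h₁.1 z ≠ h₂.1 z}))
      simpa using this
    have hp0 : 0 ≤ (p {z | h₁.1 z ≠ h₂.1 z}).toReal := ENNReal.toReal_nonneg
    have hq0 : 0 ≤ (q {z | h₁.1 z ≠ h₂.1 z}).toReal := ENNReal.toReal_nonneg
    rw [hf, abs_sub_le_iff]
    constructor <;> linarith
  set S : ℝ := ⨆ h₁ : H, ⨆ h₂ : H, f h₁ h₂ with hSdef
  have hterm : ∀ h₁ h₂ : H, f h₁ h₂ ≤ S := by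
    intro h₁ h₂
    have b1 : BddAbove (Set.range fun h₂ : H => f h₁ h₂) := by
      refine ⟨1, ?_⟩; rintro x ⟨h₂, rfl⟩; exact hbd h₁ h₂
    have b2 : BddAbove (Set.range fun h₁ : H => ⨆ h₂ : H, f h₁ h₂) := by
      refine ⟨1, ?_⟩; rintro x ⟨h₁, rfl⟩; exact ciSup_le fun h₂ => hbd h₁ h₂
    calc f h₁ h₂ ≤ ⨆ h₂ : H, f h₁ h₂ := le_ciSup b1 h₂
      _ ≤ S := le_ciSup b2 h₁
  have hdB : (1 / 2) * dB H p q = S := by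
    rw [dB, hSdef]; ring_nf; rfl
  rw [hdB]
  rw [show (q {z | h z ≠ fq z}).toReal + S +
      (⨅ h' : H, ((p {z | h'.1 z ≠ fp z}).toReal + (q {z | h'.1 z ≠ fq z}).toReal))
      = (⨅ h' : H, ((p {z | h'.1 z ≠ fp z}).toReal + (q {z | h'.1 z ≠ fq z}).toReal))
        + ((q {z | h z ≠ fq z}).toReal + S) by ring]
  rw [← sub_le_iff_le_add]
  refine le_ciInf fun h' => ?_
  rw [sub_le_iff_le_add]
  have t1 := tri_aux p h h'.1 fp
  have t2 := tri_aux q h fq h'.1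
  have e : {z | fq z ≠ h'.1 z} = {z | h'.1 z ≠ fq z} := by
    ext z; exact ne_comm
  rw [e] at t2
  have t3 : (p {z | h z ≠ h'.1 z}).toReal ≤ (q {z | h z ≠ h'.1 z}).toReal + S := by
    have := hterm ⟨h, hh⟩ h'
    rw [hf] at this
    have habs : (p {z | h z ≠ h'.1 z}).toReal - (q {z | h z ≠ h'.1 z}).toReal ≤
        |(p {z | h z ≠ h'.1 z}).toReal - (q {z | h z ≠ h'.1 z}).toReal| := le_abs_self _
    simp only at this
    linarith
  linarith
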